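/- Let $d\ge1$ and let $a$ be a real-valued polynomial on $\mathbb{R}^{2d}$ of degree $m\ge2$ satisfying the Shubin ellipticity hypotheses with constants $C_1,B_1$. Then for each fixed $n\in\mathbb{Z}_+$ there exist constants $C',B'>0$ such that $\langle w\rangle^{nm}/C'\le a^{(\# n)}(w)\le C'\langle w\rangle^{nm}$ for all $w\in Q_{B'}^{c}$, and $\big|D^{\gamma}\big(a^{(\# n)}(w)-(a(w))^{n}\big)\big|\le C'^{\,|\gamma|+1}\,\langle w\rangle^{nm-|\gamma|-2}$ for all $w\in\mathbb{R}^{2d}$ and all multi-indices $\gamma\in\mathbb{N}^{2d}$. -/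

import Mathlib

open scoped BigOperators

noncomputable section

/-- Japanese bracket `⟨w⟩ = (1+|w|²)^{1/2}`. -/
def jap {ι : Type*} [Fintype ι] (w : EuclideanSpace ℝ ι) : ℝ :=
  Real.sqrt (1 + ‖w‖ ^ 2)

/-- `|α|` for a multi-index. -/
def mdeg {ι : Type*} [Fintype ι] (α : ι → ℕ) : ℕ := ∑ i, α i

/-- `α!` for a multi-index. -/
def mfact {ι : Type*} [Fintype ι] (α : ι → ℕ) : ℕ := ∏ i, Nat.factorial (α i)

/-- Partial derivative in the `i`-th coordinate direction. -/
def pd {ι : Type*} [Fintype ι] [DecidableEq ι] {F : Type*} [NormedAddCommGroup F]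
    [NormedSpace ℝ F] (i : ι) (f : EuclideanSpace ℝ ι → F) : EuclideanSpace ℝ ι → F :=
  fun x => fderiv ℝ f x (EuclideanSpace.single i 1)

/-- Iterated partial derivative along a list of directions. -/
def listDeriv {ι : Type*} [Fintype ι] [DecidableEq ι] {F : Type*} [NormedAddCommGroup F]
    [NormedSpace ℝ F] : List ι → (EuclideanSpace ℝ ι → F) → EuclideanSpace ℝ ι → F
  | [], f => f
  | i :: l, f => pd i (listDeriv l f)

/-- Multi-index partial derivative `∂^α`. -/
def mderiv {ι : Type*} [Fintype ι] [DecidableEq ι] {F : Type*} [NormedAddCommGroup F]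
    [NormedSpace ℝ F] (α : ι → ℕ) (f : EuclideanSpace ℝ ι → F) : EuclideanSpace ℝ ι → F :=
  listDeriv (Finset.univ.toList.flatMap fun i => List.replicate (α i) i) f

/-- `D^α = i^{-|α|} ∂^α`. -/
def Dm {ι : Type*} [Fintype ι] [DecidableEq ι] {F : Type*} [NormedAddCommGroup F]
    [NormedSpace ℂ F] (α : ι → ℕ) (f : EuclideanSpace ℝ ι → F) : EuclideanSpace ℝ ι → F :=
  fun w => ((-Complex.I) ^ mdeg α) • mderiv α f w

/-- `⟨x⟩` for the `x`-part of a phase-space point `w = (x, ξ)`. -/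
def japX {d : ℕ} (w : EuclideanSpace ℝ (Fin d ⊕ Fin d)) : ℝ :=
  Real.sqrt (1 + ∑ i : Fin d, (w (Sum.inl i)) ^ 2)

/-- `⟨ξ⟩` for the `ξ`-part of a phase-space point `w = (x, ξ)`. -/
def japXi {d : ℕ} (w : EuclideanSpace ℝ (Fin d ⊕ Fin d)) : ℝ :=
  Real.sqrt (1 + ∑ i : Fin d, (w (Sum.inr i)) ^ 2)

/-- The set `Q_B`. -/
def QQ (d : ℕ) (B : ℝ) : Set (EuclideanSpace ℝ (Fin d ⊕ Fin d)) :=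
  {w | japX w < B ∧ japXi w < B}

/-- `∂_ξ^α D_x^β f`. -/
def pdXxi {d : ℕ} {F : Type*} [NormedAddCommGroup F] [NormedSpace ℂ F]
    (β α : Fin d → ℕ) (f : EuclideanSpace ℝ (Fin d ⊕ Fin d) → F) :
    EuclideanSpace ℝ (Fin d ⊕ Fin d) → F :=
  fun w => ((-Complex.I) ^ mdeg β) • mderiv (Sum.elim β α) f w

/-- `(a^{#(n+1)})_j`  (so `sharpIter a n j = (a^{#(n+1)})_j`). -/
def sharpIter {d : ℕ} (a : EuclideanSpace ℝ (Fin d ⊕ Fin d) → ℂ) :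
    ℕ → ℕ → EuclideanSpace ℝ (Fin d ⊕ Fin d) → ℂ
  | 0, 0 => a
  | 0, _ + 1 => fun _ => 0
  | n + 1, j => fun w =>
      ∑ sl ∈ Finset.HasAntidiagonal.antidiagonal j,
        ∑ p ∈ Finset.HasAntidiagonal.antidiagonal sl.2,
          ∑ α ∈ Finset.Nat.antidiagonalTuple d p.1,
            ∑ β ∈ Finset.Nat.antidiagonalTuple d p.2,
              ((-1 : ℂ) ^ mdeg β / ((mfact α : ℂ) * (mfact β : ℂ) * 2 ^ sl.2)) *
                (pdXxi β α (sharpIter a n sl.1) w * pdXxi α β a w)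

/-- `a^{(#n)} = ∑_j (a^{#n})_j`, with `a^{(#0)} = 1`. -/
def sharpTot {d : ℕ} (a : EuclideanSpace ℝ (Fin d ⊕ Fin d) → ℂ) :
    ℕ → EuclideanSpace ℝ (Fin d ⊕ Fin d) → ℂ
  | 0 => fun _ => 1
  | n + 1 => fun w => ∑' j, sharpIter a n j w

/-- `P(t) = ∑ t^n / M̂_n`. -/
def Pser (Mh : ℕ → ℝ) (t : ℝ) : ℝ := ∑' n, t ^ n / Mh n

/-- The associated function `M(t) = sup_p ln₊ (t^p / M_p)`. -/
def assocFn (M : ℕ → ℝ) (t : ℝ) : ℝ := ⨆ p : ℕ, max (Real.log (t ^ p / M p)) 0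


open MvPolynomial in
/-- Evaluation of a complex MvPolynomial at a real point. -/
def evalF {d : ℕ} (q : MvPolynomial (Fin d ⊕ Fin d) ℂ)
    (w : EuclideanSpace ℝ (Fin d ⊕ Fin d)) : ℂ :=
  MvPolynomial.eval (fun j => (w j : ℂ)) q

/-- Iterated formal partial derivative along a list. -/
def pdList {d : ℕ} : List (Fin d ⊕ Fin d) → MvPolynomial (Fin d ⊕ Fin d) ℂ →
    MvPolynomial (Fin d ⊕ Fin d) ℂ
  | [], q => q
  | i :: l, q => MvPolynomial.pderiv i (pdList l q)

/-- The list of directions attached to a multi-index. -/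
def lst {d : ℕ} (γ : Fin d ⊕ Fin d → ℕ) : List (Fin d ⊕ Fin d) :=
  Finset.univ.toList.flatMap fun i => List.replicate (γ i) i

lemma lst_length {d : ℕ} (γ : Fin d ⊕ Fin d → ℕ) : (lst γ).length = mdeg γ := by
  simp [lst, mdeg, Finset.sum_map_toList]

lemma lst_zero {d : ℕ} : lst (fun _ : Fin d ⊕ Fin d => 0) = [] := by
  simp [lst]

/-- Degree bound predicate allowing "negative degree" (forcing the polynomial to be `0`). -/
def DegLe {d : ℕ} (q : MvPolynomial (Fin d ⊕ Fin d) ℂ) (D : ℝ) : Prop :=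
  q = 0 ∨ (0 ≤ D ∧ (q.totalDegree : ℝ) ≤ D)

lemma degLe_zero {d : ℕ} (D : ℝ) : DegLe (0 : MvPolynomial (Fin d ⊕ Fin d) ℂ) D := Or.inl rfl

lemma degLe_mono {d : ℕ} {q : MvPolynomial (Fin d ⊕ Fin d) ℂ} {D D' : ℝ}
    (h : DegLe q D) (hDD : D ≤ D') : DegLe q D' := by
  rcases h with h | ⟨h1, h2⟩
  · exact Or.inl h
  · exact Or.inr ⟨h1.trans hDD, h2.trans hDD⟩

lemma degLe_neg_eq_zero {d : ℕ} {q : MvPolynomial (Fin d ⊕ Fin d) ℂ} {D : ℝ}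
    (h : DegLe q D) (hD : D < 0) : q = 0 := by
  rcases h with h | ⟨h1, _⟩
  · exact h
  · exact absurd h1 (not_le.2 hD)

lemma degLe_add {d : ℕ} {q q' : MvPolynomial (Fin d ⊕ Fin d) ℂ} {D : ℝ}
    (h : DegLe q D) (h' : DegLe q' D) : DegLe (q + q') D := by
  rcases h with rfl | ⟨h1, h2⟩
  · simpa using h'
  rcases h' with rfl | ⟨h1', h2'⟩
  · rw [add_zero]; exact Or.inr ⟨h1, h2⟩
  refine Or.inr ⟨h1, ?_⟩
  calc ((q + q').totalDegree : ℝ) ≤ ((max q.totalDegree q'.totalDegree : ℕ) : ℝ) := by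
        exact_mod_cast MvPolynomial.totalDegree_add q q'
    _ ≤ D := by
        rcases max_cases q.totalDegree q'.totalDegree with ⟨he, _⟩ | ⟨he, _⟩ <;> rw [he]
        exacts [h2, h2']

lemma degLe_sum {d : ℕ} {ι' : Type*} (s : Finset ι') (f : ι' → MvPolynomial (Fin d ⊕ Fin d) ℂ)
    {D : ℝ} (h : ∀ i ∈ s, DegLe (f i) D) : DegLe (∑ i ∈ s, f i) D := by
  classical
  induction s using Finset.induction_on with
  | empty => simpa using degLe_zero D
  | insert _ _ hx ih =>
      rw [Finset.sum_insert hx]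
      exact degLe_add (h _ (Finset.mem_insert_self _ _))
        (ih fun i hi => h i (Finset.mem_insert_of_mem hi))

lemma degLe_smul {d : ℕ} {q : MvPolynomial (Fin d ⊕ Fin d) ℂ} {D : ℝ} (c : ℂ)
    (h : DegLe q D) : DegLe (c • q) D := by
  rcases h with rfl | ⟨h1, h2⟩
  · simpa using degLe_zero D
  refine Or.inr ⟨h1, le_trans ?_ h2⟩
  exact_mod_cast MvPolynomial.totalDegree_smul_le c q

lemma degLe_mul {d : ℕ} {q q' : MvPolynomial (Fin d ⊕ Fin d) ℂ} {D D' : ℝ}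
    (h : DegLe q D) (h' : DegLe q' D') : DegLe (q * q') (D + D') := by
  rcases h with rfl | ⟨h1, h2⟩
  · simpa using degLe_zero _
  rcases h' with rfl | ⟨h1', h2'⟩
  · simpa using degLe_zero _
  refine Or.inr ⟨by linarith, ?_⟩
  calc ((q * q').totalDegree : ℝ) ≤ ((q.totalDegree + q'.totalDegree : ℕ) : ℝ) := by
        exact_mod_cast MvPolynomial.totalDegree_mul q q'
    _ ≤ D + D' := by push_cast; linarith

open MvPolynomial in
lemma sum_pderiv_support {d : ℕ} (q : MvPolynomial (Fin d ⊕ Fin d) ℂ) (i : Fin d ⊕ Fin d)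
    {s' : (Fin d ⊕ Fin d) →₀ ℕ} (hs' : s' ∈ (pderiv i q).support) :
    (s'.sum fun _ e => e) + 1 ≤ q.totalDegree := by
  classical
  have hq : pderiv i q = ∑ s ∈ q.support, monomial (s - Finsupp.single i 1) (q.coeff s * s i) := by
    conv_lhs => rw [q.as_sum]
    rw [map_sum]
    exact Finset.sum_congr rfl fun s _ => pderiv_monomial
  rw [hq] at hs'
  have := MvPolynomial.support_sum hs'
  rcases Finset.mem_biUnion.1 this with ⟨s, hs, hmem⟩
  have hsub := MvPolynomial.support_monomial_subset hmem
  have hs'eq : s' = s - Finsupp.single i 1 := Finset.mem_singleton.1 hsub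
  have hne : q.coeff s * (s i : ℂ) ≠ 0 := by
    intro h0
    rw [hs'eq, h0] at hmem
    simp at hmem
  have hsi : 1 ≤ s i := by
    rcases Nat.eq_zero_or_pos (s i) with h | h
    · exact absurd (by simp [h]) hne
    · exact h
  have hsum : (s'.sum fun _ e => e) + 1 ≤ s.sum fun _ e => e := by
    rw [hs'eq]
    rw [Finsupp.sum_fintype _ _ (fun _ => rfl), Finsupp.sum_fintype _ _ (fun _ => rfl)]
    have h1 : ∀ j, (s - Finsupp.single i 1 : (Fin d ⊕ Fin d) →₀ ℕ) j
        = s j - (Finsupp.single i 1) j := fun j =>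
      Finsupp.tsub_apply s (Finsupp.single i 1) j
    calc (∑ j, (s - Finsupp.single i 1 : (Fin d ⊕ Fin d) →₀ ℕ) j) + 1
        = (∑ j ∈ Finset.univ.erase i, (s - Finsupp.single i 1 : (Fin d ⊕ Fin d) →₀ ℕ) j)
            + ((s - Finsupp.single i 1 : (Fin d ⊕ Fin d) →₀ ℕ) i + 1) := by
          rw [← Finset.add_sum_erase _ _ (Finset.mem_univ i)]; ring
      _ ≤ (∑ j ∈ Finset.univ.erase i, s j) + s i := by
          gcongr with j hj
          · rw [h1 j]
            exact Nat.sub_le _ _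
          · rw [h1 i]
            simp only [Finsupp.single_eq_same]
            omega
      _ = ∑ j, s j := by rw [← Finset.add_sum_erase _ _ (Finset.mem_univ i)]; ring
  exact hsum.trans (MvPolynomial.le_totalDegree hs)

lemma degLe_pderiv {d : ℕ} {q : MvPolynomial (Fin d ⊕ Fin d) ℂ} {D : ℝ} (i : Fin d ⊕ Fin d)
    (h : DegLe q D) : DegLe (MvPolynomial.pderiv i q) (D - 1) := by
  classical
  rcases h with rfl | ⟨h1, h2⟩
  · simpa using degLe_zero _
  by_cases hz : MvPolynomial.pderiv i q = 0
  · rw [hz]; exact degLe_zero _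
  have hsup : (MvPolynomial.pderiv i q).support.Nonempty := by
    rwa [MvPolynomial.support_nonempty]
  obtain ⟨s', hs'⟩ := hsup
  have hkey : ∀ s'' ∈ (MvPolynomial.pderiv i q).support,
      (s''.sum fun _ e => e) + 1 ≤ q.totalDegree := fun s'' hs'' =>
    sum_pderiv_support q i hs''
  have htd : (MvPolynomial.pderiv i q).totalDegree + 1 ≤ q.totalDegree := by
    rw [MvPolynomial.totalDegree]
    have : ∀ s'' ∈ (MvPolynomial.pderiv i q).support,
        (s''.sum fun _ e => e) ≤ q.totalDegree - 1 := by
      intro s'' hs''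
      have := hkey s'' hs''
      omega
    have hle := Finset.sup_le this
    have h1q : 1 ≤ q.totalDegree := by
      have := hkey s' hs'
      omega
    omega
  refine Or.inr ⟨?_, ?_⟩
  · have : 1 ≤ q.totalDegree := by omega
    have : (1 : ℝ) ≤ q.totalDegree := by exact_mod_cast this
    linarith
  · have : ((MvPolynomial.pderiv i q).totalDegree : ℝ) + 1 ≤ (q.totalDegree : ℝ) := by
      exact_mod_cast htd
    linarith

lemma degLe_pdList {d : ℕ} {q : MvPolynomial (Fin d ⊕ Fin d) ℂ} {D : ℝ}
    (l : List (Fin d ⊕ Fin d)) (h : DegLe q D) : DegLe (pdList l q) (D - l.length) := by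
  induction l with
  | nil => simpa [pdList] using h
  | cons i l ih =>
      have := degLe_pderiv i ih
      simp only [pdList, List.length_cons]
      exact degLe_mono this (le_of_eq (by push_cast; ring))

lemma jap_one_le {ι : Type*} [Fintype ι] (w : EuclideanSpace ℝ ι) : 1 ≤ jap w := by
  rw [jap]
  calc (1:ℝ) = Real.sqrt 1 := Real.sqrt_one.symm
    _ ≤ Real.sqrt (1 + ‖w‖ ^ 2) := Real.sqrt_le_sqrt (by nlinarith [sq_nonneg ‖w‖])

lemma jap_pos {ι : Type*} [Fintype ι] (w : EuclideanSpace ℝ ι) : 0 < jap w :=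
  lt_of_lt_of_le one_pos (jap_one_le w)

lemma norm_sq_eq {ι : Type*} [Fintype ι] (w : EuclideanSpace ℝ ι) :
    ‖w‖ ^ 2 = ∑ i, (w i) ^ 2 := by
  rw [EuclideanSpace.norm_eq]
  rw [Real.sq_sqrt (by positivity)]
  congr 1; ext i; rw [Real.norm_eq_abs, sq_abs]

lemma abs_coord_le_jap {ι : Type*} [Fintype ι] (w : EuclideanSpace ℝ ι) (j : ι) :
    |w j| ≤ jap w := by
  rw [jap, ← Real.sqrt_sq_eq_abs]
  apply Real.sqrt_le_sqrt
  rw [norm_sq_eq]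
  have h2 : w j ^ 2 ≤ ∑ i, w i ^ 2 := by
    simpa using Finset.single_le_sum (f := fun i => (w i)^2) (fun i _ => sq_nonneg _)
      (Finset.mem_univ j)
  linarith

/-- Sum of absolute values of the coefficients. -/
def Kc {d : ℕ} (q : MvPolynomial (Fin d ⊕ Fin d) ℂ) : ℝ :=
  ∑ s ∈ q.support, ‖q.coeff s‖

lemma Kc_nonneg {d : ℕ} (q : MvPolynomial (Fin d ⊕ Fin d) ℂ) : 0 ≤ Kc q :=
  Finset.sum_nonneg fun _ _ => norm_nonneg _

lemma evalF_bound {d : ℕ} {q : MvPolynomial (Fin d ⊕ Fin d) ℂ} {D : ℝ} (h : DegLe q D)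
    (w : EuclideanSpace ℝ (Fin d ⊕ Fin d)) :
    ‖evalF q w‖ ≤ Kc q * jap w ^ D := by
  rcases h with rfl | ⟨h1, h2⟩
  · simp [evalF, Kc]
  have hjap := jap_one_le w
  have hjpos := jap_pos w
  rw [evalF, MvPolynomial.eval_eq']
  refine le_trans (norm_sum_le _ _) ?_
  rw [Kc, Finset.sum_mul]
  apply Finset.sum_le_sum
  intro s hs
  rw [norm_mul]
  apply mul_le_mul_of_nonneg_left _ (norm_nonneg _)
  calc ‖∏ i, ((w i : ℂ)) ^ s i‖ = ∏ i, |w i| ^ s i := by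
        rw [norm_prod]
        congr 1; ext i
        rw [norm_pow, Complex.norm_real, Real.norm_eq_abs]
    _ ≤ ∏ i, jap w ^ s i := by
        apply Finset.prod_le_prod (fun i _ => by positivity)
        intro i _
        exact pow_le_pow_left₀ (abs_nonneg _) (abs_coord_le_jap w i) _
    _ = jap w ^ (∑ i, s i) := by rw [Finset.prod_pow_eq_pow_sum]
    _ = jap w ^ ((∑ i, s i : ℕ) : ℝ) := by rw [Real.rpow_natCast]
    _ ≤ jap w ^ D := by
        apply Real.rpow_le_rpow_of_exponent_le hjap
        have hmem : (s.sum fun _ e => e) ≤ q.totalDegree := MvPolynomial.le_totalDegree hs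
        have : (s.sum fun _ e => e) = ∑ i, s i := Finsupp.sum_fintype _ _ (fun _ => rfl)
        rw [this] at hmem
        calc ((∑ i, s i : ℕ) : ℝ) ≤ (q.totalDegree : ℝ) := by exact_mod_cast hmem
          _ ≤ D := h2

open MvPolynomial in
lemma evalF_hasFDerivAt {d : ℕ} (q : MvPolynomial (Fin d ⊕ Fin d) ℂ)
    (w : EuclideanSpace ℝ (Fin d ⊕ Fin d)) :
    HasFDerivAt (evalF q)
      (∑ i, evalF (MvPolynomial.pderiv i q) w •
        (Complex.ofRealCLM.comp
          (EuclideanSpace.proj i : EuclideanSpace ℝ (Fin d ⊕ Fin d) →L[ℝ] ℝ))) w := by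
  classical
  induction q using MvPolynomial.induction_on with
  | C c =>
      have he : evalF (C c : MvPolynomial (Fin d ⊕ Fin d) ℂ) = fun _ => c := by
        funext v; simp [evalF]
      rw [he]
      refine (hasFDerivAt_const c w).congr_fderiv ?_
      symm
      apply Finset.sum_eq_zero
      intro i _
      rw [pderiv_C]
      simp [evalF]
      ext v; simp
  | add p q hp hq =>
      have he : evalF (p + q) = fun v => evalF p v + evalF q v := by
        funext v; simp [evalF]
      rw [he]
      refine (hp.add hq).congr_fderiv ?_
      ext v
      simp only [ContinuousLinearMap.add_apply, ContinuousLinearMap.sum_apply,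
        ContinuousLinearMap.smul_apply, ContinuousLinearMap.coe_comp', Function.comp_apply,
        Complex.ofRealCLM_apply, smul_eq_mul, map_add, PiLp.proj_apply]
      rw [← Finset.sum_add_distrib]
      apply Finset.sum_congr rfl
      intro i _
      simp [evalF, add_mul]
  | mul_X p j hp =>
      have hx : HasFDerivAt (fun v : EuclideanSpace ℝ (Fin d ⊕ Fin d) => ((v j : ℝ) : ℂ))
          (Complex.ofRealCLM.comp
            (EuclideanSpace.proj j : EuclideanSpace ℝ (Fin d ⊕ Fin d) →L[ℝ] ℝ)) w :=
        (Complex.ofRealCLM.comp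
          (EuclideanSpace.proj j : EuclideanSpace ℝ (Fin d ⊕ Fin d) →L[ℝ] ℝ)).hasFDerivAt
      have he : evalF (p * X j) = fun v => evalF p v * ((v j : ℝ) : ℂ) := by
        funext v; simp [evalF]
      rw [he]
      refine (hp.mul hx).congr_fderiv ?_
      have hsplit : ∀ i : Fin d ⊕ Fin d,
          evalF (MvPolynomial.pderiv i (p * X j)) w
            = evalF (MvPolynomial.pderiv i p) w * ((w j : ℝ) : ℂ)
              + (if i = j then evalF p w else 0) := by
        intro i
        rw [pderiv_mul]
        by_cases hij : i = j
        · subst hij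
          simp [evalF, pderiv_X_self]
        · rw [pderiv_X_of_ne (Ne.symm hij)]
          simp [evalF, hij]
      ext v
      symm
      simp only [ContinuousLinearMap.add_apply, ContinuousLinearMap.sum_apply,
        ContinuousLinearMap.smul_apply, ContinuousLinearMap.coe_comp', Function.comp_apply,
        Complex.ofRealCLM_apply, smul_eq_mul, hsplit, PiLp.proj_apply]
      rw [Finset.sum_congr rfl (fun i _ => add_mul _ _ ((v i : ℂ))), Finset.sum_add_distrib]
      have h1 : ∑ i : Fin d ⊕ Fin d, (if i = j then evalF p w else 0) * ((v i : ℝ) : ℂ)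
      = evalF p w * ((v j : ℝ) : ℂ) := by
        rw [Finset.sum_congr rfl (fun i _ => ite_mul _ _ _ ((v i : ℝ) : ℂ))]
        simp [Finset.sum_ite_eq']
      rw [h1, Finset.mul_sum]
      rw [Finset.sum_congr rfl (fun i _ => by ring :
        ∀ i ∈ Finset.univ, evalF (MvPolynomial.pderiv i p) w * ((w j : ℝ) : ℂ) * ((v i : ℝ) : ℂ)
          = ((w j : ℝ) : ℂ) * (evalF (MvPolynomial.pderiv i p) w * ((v i : ℝ) : ℂ)))]
      ring

lemma pd_evalF {d : ℕ} (q : MvPolynomial (Fin d ⊕ Fin d) ℂ) (i : Fin d ⊕ Fin d) :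
    pd i (evalF q) = evalF (MvPolynomial.pderiv i q) := by
  classical
  funext w
  rw [pd, (evalF_hasFDerivAt q w).fderiv]
  rw [ContinuousLinearMap.sum_apply]
  rw [Finset.sum_eq_single i]
  · simp
  · intro j _ hji
    simp [EuclideanSpace.single_apply, hji]
  · intro h
    exact absurd (Finset.mem_univ i) h

lemma listDeriv_evalF {d : ℕ} (l : List (Fin d ⊕ Fin d)) (q : MvPolynomial (Fin d ⊕ Fin d) ℂ) :
    listDeriv l (evalF q) = evalF (pdList l q) := by
  induction l with
  | nil => rfl
  | cons i l ih =>
      show pd i (listDeriv l (evalF q)) = _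
      rw [ih, pdList, pd_evalF]

lemma mderiv_evalF {d : ℕ} (γ : Fin d ⊕ Fin d → ℕ) (q : MvPolynomial (Fin d ⊕ Fin d) ℂ) :
    mderiv γ (evalF q) = evalF (pdList (lst γ) q) :=
  listDeriv_evalF _ q

/-- Formal (polynomial-level) version of `sharpIter`. -/
def polyIter {d : ℕ} (pc : MvPolynomial (Fin d ⊕ Fin d) ℂ) :
    ℕ → ℕ → MvPolynomial (Fin d ⊕ Fin d) ℂ
  | 0, 0 => pc
  | 0, _ + 1 => 0
  | n + 1, j =>
      ∑ sl ∈ Finset.HasAntidiagonal.antidiagonal j,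
        ∑ pr ∈ Finset.HasAntidiagonal.antidiagonal sl.2,
          ∑ α ∈ Finset.Nat.antidiagonalTuple d pr.1,
            ∑ β ∈ Finset.Nat.antidiagonalTuple d pr.2,
              (((-1 : ℂ) ^ mdeg β / ((mfact α : ℂ) * (mfact β : ℂ) * 2 ^ sl.2)) *
                (-Complex.I) ^ mdeg β * (-Complex.I) ^ mdeg α) •
                (pdList (lst (Sum.elim β α)) (polyIter pc n sl.1) *
                  pdList (lst (Sum.elim α β)) pc)

lemma evalF_smul {d : ℕ} (c : ℂ) (q : MvPolynomial (Fin d ⊕ Fin d) ℂ)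
    (w : EuclideanSpace ℝ (Fin d ⊕ Fin d)) : evalF (c • q) w = c * evalF q w := by
  rw [evalF, evalF, MvPolynomial.smul_eq_C_mul, map_mul, MvPolynomial.eval_C]

lemma sharpIter_eq_evalF {d : ℕ} (pc : MvPolynomial (Fin d ⊕ Fin d) ℂ) :
    ∀ n j, sharpIter (evalF pc) n j = evalF (polyIter pc n j) := by
  intro n
  induction n with
  | zero =>
      intro j
      match j with
      | 0 => rfl
      | j + 1 =>
          funext w
          show (0 : ℂ) = evalF 0 w
          simp [evalF]
  | succ n ih =>
      intro j
      funext w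
      show (∑ sl ∈ Finset.HasAntidiagonal.antidiagonal j, ∑ pr ∈ Finset.HasAntidiagonal.antidiagonal sl.2,
          ∑ α ∈ Finset.Nat.antidiagonalTuple d pr.1, ∑ β ∈ Finset.Nat.antidiagonalTuple d pr.2,
            ((-1 : ℂ) ^ mdeg β / ((mfact α : ℂ) * (mfact β : ℂ) * 2 ^ sl.2)) *
              (pdXxi β α (sharpIter (evalF pc) n sl.1) w * pdXxi α β (evalF pc) w)) = _
  -- unfold polyIter on the right
      rw [show polyIter pc (n+1) j = ∑ sl ∈ Finset.HasAntidiagonal.antidiagonal j,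
        ∑ pr ∈ Finset.HasAntidiagonal.antidiagonal sl.2,
          ∑ α ∈ Finset.Nat.antidiagonalTuple d pr.1,
            ∑ β ∈ Finset.Nat.antidiagonalTuple d pr.2,
              (((-1 : ℂ) ^ mdeg β / ((mfact α : ℂ) * (mfact β : ℂ) * 2 ^ sl.2)) *
                (-Complex.I) ^ mdeg β * (-Complex.I) ^ mdeg α) •
                (pdList (lst (Sum.elim β α)) (polyIter pc n sl.1) *
                  pdList (lst (Sum.elim α β)) pc) from rfl]
      rw [show ∀ Q : MvPolynomial (Fin d ⊕ Fin d) ℂ, evalF Q w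
        = MvPolynomial.eval (fun j => ((w j : ℝ) : ℂ)) Q from fun _ => rfl]
      rw [map_sum]
      apply Finset.sum_congr rfl
      intro sl _
      rw [map_sum]
      apply Finset.sum_congr rfl
      intro pr _
      rw [map_sum]
      apply Finset.sum_congr rfl
      intro α _
      rw [map_sum]
      apply Finset.sum_congr rfl
      intro β _
      rw [← show ∀ Q : MvPolynomial (Fin d ⊕ Fin d) ℂ, evalF Q w
        = MvPolynomial.eval (fun j => ((w j : ℝ) : ℂ)) Q from fun _ => rfl]
      rw [evalF_smul]
      have e1 : evalF (pdList (lst (Sum.elim β α)) (polyIter pc n sl.1) *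
          pdList (lst (Sum.elim α β)) pc) w
          = evalF (pdList (lst (Sum.elim β α)) (polyIter pc n sl.1)) w *
            evalF (pdList (lst (Sum.elim α β)) pc) w := by
        rw [evalF, evalF, evalF, map_mul]
      rw [e1]
      rw [show pdXxi β α (sharpIter (evalF pc) n sl.1) w
        = ((-Complex.I) ^ mdeg β) • mderiv (Sum.elim β α) (sharpIter (evalF pc) n sl.1) w from rfl]
      rw [ih sl.1, mderiv_evalF]
      rw [show pdXxi α β (evalF pc) w
        = ((-Complex.I) ^ mdeg α) • mderiv (Sum.elim α β) (evalF pc) w from rfl]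
      rw [mderiv_evalF]
      simp only [smul_eq_mul]
      ring

lemma mdeg_sum_elim {d : ℕ} (β α : Fin d → ℕ) :
    mdeg (Sum.elim β α) = mdeg β + mdeg α := by
  rw [mdeg, mdeg, mdeg, Fintype.sum_sum_type]
  simp

lemma degLe_polyIter {d m : ℕ} {pc : MvPolynomial (Fin d ⊕ Fin d) ℂ}
    (hpc : DegLe pc (m : ℝ)) :
    ∀ n j, DegLe (polyIter pc n j) ((n + 1) * m - 2 * j : ℝ) := by
  intro n
  induction n with
  | zero =>
      intro j
      match j with
      | 0 => simpa [polyIter] using hpc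
      | j + 1 => exact degLe_zero _
  | succ n ih =>
      intro j
      rw [show polyIter pc (n+1) j = ∑ sl ∈ Finset.HasAntidiagonal.antidiagonal j,
        ∑ pr ∈ Finset.HasAntidiagonal.antidiagonal sl.2,
          ∑ α ∈ Finset.Nat.antidiagonalTuple d pr.1,
            ∑ β ∈ Finset.Nat.antidiagonalTuple d pr.2,
              (((-1 : ℂ) ^ mdeg β / ((mfact α : ℂ) * (mfact β : ℂ) * 2 ^ sl.2)) *
                (-Complex.I) ^ mdeg β * (-Complex.I) ^ mdeg α) •
                (pdList (lst (Sum.elim β α)) (polyIter pc n sl.1) *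
                  pdList (lst (Sum.elim α β)) pc) from rfl]
      apply degLe_sum
      intro sl hsl
      apply degLe_sum
      intro pr hpr
      apply degLe_sum
      intro α hα
      apply degLe_sum
      intro β hβ
      apply degLe_smul
      have hsl' : sl.1 + sl.2 = j := (Finset.HasAntidiagonal.mem_antidiagonal).1 hsl
      have hpr' : pr.1 + pr.2 = sl.2 := (Finset.HasAntidiagonal.mem_antidiagonal).1 hpr
      have hα' : mdeg α = pr.1 := by
        have := (Finset.Nat.mem_antidiagonalTuple).1 hα
        simpa [mdeg] using this
      have hβ' : mdeg β = pr.2 := by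
        have := (Finset.Nat.mem_antidiagonalTuple).1 hβ
        simpa [mdeg] using this
      have h1 := degLe_pdList (lst (Sum.elim β α)) (ih sl.1)
      have h2 := degLe_pdList (lst (Sum.elim α β)) hpc
      rw [lst_length, mdeg_sum_elim] at h1 h2
      have := degLe_mul h1 h2
      apply degLe_mono this
      rw [hα', hβ']
      push_cast
      have : (sl.1 : ℝ) + sl.2 = j := by exact_mod_cast hsl'
      have : (pr.1 : ℝ) + pr.2 = sl.2 := by exact_mod_cast hpr'
      push_cast at *
      nlinarith [this]

lemma polyIter_zero {d : ℕ} (pc : MvPolynomial (Fin d ⊕ Fin d) ℂ) :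
    ∀ n, polyIter pc n 0 = pc ^ (n + 1) := by
  intro n
  induction n with
  | zero => simp [polyIter]
  | succ n ih =>
      rw [show polyIter pc (n+1) 0 = ∑ sl ∈ Finset.HasAntidiagonal.antidiagonal 0,
        ∑ pr ∈ Finset.HasAntidiagonal.antidiagonal sl.2,
          ∑ α ∈ Finset.Nat.antidiagonalTuple d pr.1,
            ∑ β ∈ Finset.Nat.antidiagonalTuple d pr.2,
              (((-1 : ℂ) ^ mdeg β / ((mfact α : ℂ) * (mfact β : ℂ) * 2 ^ sl.2)) *
                (-Complex.I) ^ mdeg β * (-Complex.I) ^ mdeg α) •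
                (pdList (lst (Sum.elim β α)) (polyIter pc n sl.1) *
                  pdList (lst (Sum.elim α β)) pc) from rfl]
      rw [Finset.Nat.antidiagonal_zero, Finset.sum_singleton]
      rw [show ((0,0) : ℕ × ℕ).2 = 0 from rfl, Finset.Nat.antidiagonal_zero,
        Finset.sum_singleton]
      rw [show ((0,0) : ℕ × ℕ).1 = 0 from rfl, show ((0,0) : ℕ × ℕ).2 = 0 from rfl]
      rw [Finset.Nat.antidiagonalTuple_zero_right, Finset.sum_singleton, Finset.sum_singleton]
      have hz : Sum.elim (0 : Fin d → ℕ) (0 : Fin d → ℕ) = (fun _ => 0) := by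
        funext i; cases i <;> rfl
      have hmdeg : mdeg (0 : Fin d → ℕ) = 0 := by simp [mdeg]
      have hmfact : mfact (0 : Fin d → ℕ) = 1 := by simp [mfact]
      rw [hz, hmdeg, hmfact, lst_zero]
      show ((-1 : ℂ) ^ 0 / ((1 : ℕ) * (1 : ℕ) * 2 ^ 0) * (-Complex.I) ^ 0 * (-Complex.I) ^ 0) •
        (polyIter pc n 0 * pc) = _
      rw [ih]
      norm_num
      ring

lemma evalF_sum {d : ℕ} {ι' : Type*} (s : Finset ι') (f : ι' → MvPolynomial (Fin d ⊕ Fin d) ℂ)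
    (w : EuclideanSpace ℝ (Fin d ⊕ Fin d)) :
    evalF (∑ j ∈ s, f j) w = ∑ j ∈ s, evalF (f j) w := by
  rw [evalF, map_sum]
  rfl

lemma sharpTot_eq_evalF {d m k : ℕ} {pc : MvPolynomial (Fin d ⊕ Fin d) ℂ}
    (hpc : DegLe pc (m : ℝ)) :
    sharpTot (evalF pc) (k + 1)
      = evalF (pc ^ (k + 1) + ∑ j ∈ Finset.range ((k + 1) * m), polyIter pc k (j + 1)) := by
  funext w
  show (∑' j, sharpIter (evalF pc) k j w) = _
  have h0 : ∀ j ∉ Finset.range ((k + 1) * m + 1), sharpIter (evalF pc) k j w = 0 := by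
    intro j hj
    rw [Finset.mem_range, not_lt] at hj
    have hdeg := degLe_polyIter hpc k j
    have hneg : ((k : ℝ) + 1) * m - 2 * j < 0 := by
      have h2' : (((k + 1) * m : ℕ) : ℝ) + 1 ≤ (j : ℝ) := by exact_mod_cast hj
      push_cast at h2' ⊢
      nlinarith [h2', Nat.cast_nonneg (α := ℝ) ((k+1)*m)]
    have hz : polyIter pc k j = 0 := degLe_neg_eq_zero hdeg (by push_cast at hneg ⊢; linarith)
    rw [sharpIter_eq_evalF, hz]
    simp [evalF]
  rw [tsum_eq_sum h0]
  rw [Finset.sum_congr rfl fun j _ => by rw [sharpIter_eq_evalF]]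
  rw [← evalF_sum]
  congr 1
  rw [Finset.sum_range_succ']
  rw [polyIter_zero]
  ring

lemma japX_le_jap {d : ℕ} (w : EuclideanSpace ℝ (Fin d ⊕ Fin d)) : japX w ≤ jap w := by
  rw [japX, jap]
  apply Real.sqrt_le_sqrt
  rw [norm_sq_eq, Fintype.sum_sum_type]
  have : (0:ℝ) ≤ ∑ i : Fin d, (w (Sum.inr i))^2 := Finset.sum_nonneg fun _ _ => sq_nonneg _
  linarith

lemma japXi_le_jap {d : ℕ} (w : EuclideanSpace ℝ (Fin d ⊕ Fin d)) : japXi w ≤ jap w := by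
  rw [japXi, jap]
  apply Real.sqrt_le_sqrt
  rw [norm_sq_eq, Fintype.sum_sum_type]
  have : (0:ℝ) ≤ ∑ i : Fin d, (w (Sum.inl i))^2 := Finset.sum_nonneg fun _ _ => sq_nonneg _
  linarith

lemma td_map_le {d : ℕ} (p : MvPolynomial (Fin d ⊕ Fin d) ℝ) :
    (MvPolynomial.map (algebraMap ℝ ℂ) p).totalDegree ≤ p.totalDegree := by
  rw [MvPolynomial.totalDegree]
  apply Finset.sup_le
  intro s hs
  exact MvPolynomial.le_totalDegree (MvPolynomial.support_map_subset _ _ hs)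

lemma coe_eval_eq_evalF {d : ℕ} (p : MvPolynomial (Fin d ⊕ Fin d) ℝ)
    (w : EuclideanSpace ℝ (Fin d ⊕ Fin d)) :
    ((MvPolynomial.eval (fun i => w i) p : ℝ) : ℂ)
      = evalF (MvPolynomial.map (algebraMap ℝ ℂ) p) w := by
  rw [evalF, MvPolynomial.eval_map]
  rw [MvPolynomial.eval, MvPolynomial.coe_eval₂Hom]
  rw [show ((MvPolynomial.eval₂ (RingHom.id ℝ) (fun i => w i) p : ℝ) : ℂ)
    = algebraMap ℝ ℂ (MvPolynomial.eval₂ (RingHom.id ℝ) (fun i => w i) p) from rfl]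
  rw [MvPolynomial.eval₂_comp_left (algebraMap ℝ ℂ) (RingHom.id ℝ) (fun i => w i) p]
  simp [Function.comp_def]

lemma mderiv_zero_apply {d : ℕ} (a : EuclideanSpace ℝ (Fin d ⊕ Fin d) → ℝ) :
    mderiv (fun _ => 0) a = a := by
  show listDeriv (lst (fun _ => 0)) a = a
  rw [lst_zero]
  rfl

lemma norm_Dm_eq {d : ℕ} (γ : Fin d ⊕ Fin d → ℕ) (f : EuclideanSpace ℝ (Fin d ⊕ Fin d) → ℂ)
    (w : EuclideanSpace ℝ (Fin d ⊕ Fin d)) : ‖Dm γ f w‖ = ‖mderiv γ f w‖ := by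
  rw [Dm]
  rw [norm_smul, norm_pow, norm_neg, Complex.norm_I, one_pow, one_mul]

set_option maxHeartbeats 1600000

/-- two-sided bounds for `a^{(#n)}` and estimates for `a^{(#n)} - a^n`, for a fixed
`n ≥ 1` and an elliptic Shubin polynomial `a` of degree `m ≥ 2`. -/
theorem stmt8 {d m : ℕ} (hd : 1 ≤ d) (hm : 2 ≤ m)
    (a : EuclideanSpace ℝ (Fin d ⊕ Fin d) → ℝ)
    (p : MvPolynomial (Fin d ⊕ Fin d) ℝ)
    (hp : ∀ w, a w = MvPolynomial.eval (fun i => w i) p)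
    (hpdeg : p.totalDegree = m)
    (C₁ B₁ : ℝ) (hC₁ : 1 ≤ C₁) (hB₁ : 1 ≤ B₁)
    (hder : ∀ (α : Fin d ⊕ Fin d → ℕ) (w),
      |mderiv α a w| ≤ C₁ * jap w ^ ((m : ℝ) - (mdeg α : ℝ)))
    (hell : ∀ w ∉ QQ d B₁, jap w ^ m ≤ C₁ * a w ∧ 1 ≤ a w)
    (n : ℕ) (hn : 1 ≤ n) :
    ∃ C' B' : ℝ, 0 < C' ∧ 0 < B' ∧
      (∀ w ∉ QQ d B',
        jap w ^ (n * m) / C' ≤ (sharpTot (fun v => (a v : ℂ)) n w).re ∧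
        (sharpTot (fun v => (a v : ℂ)) n w).re ≤ C' * jap w ^ (n * m)) ∧
      ∀ (w) (γ : Fin d ⊕ Fin d → ℕ),
        ‖Dm γ (fun v => sharpTot (fun u => (a u : ℂ)) n v - ((a v : ℝ) : ℂ) ^ n) w‖ ≤
          C' ^ (mdeg γ + 1) * jap w ^ (((n * m : ℕ) : ℝ) - (mdeg γ : ℝ) - 2) := by
  classical
  obtain ⟨k, rfl⟩ : ∃ k, n = k + 1 := ⟨n - 1, by omega⟩
  set pc : MvPolynomial (Fin d ⊕ Fin d) ℂ := MvPolynomial.map (algebraMap ℝ ℂ) p with hpc_def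
  set N : ℕ := (k + 1) * m with hN_def
  have hAeq : (fun v : EuclideanSpace ℝ (Fin d ⊕ Fin d) => ((a v : ℝ) : ℂ)) = evalF pc := by
    funext v
    rw [hp v, coe_eval_eq_evalF]
  have hpcdeg : DegLe pc (m : ℝ) := by
    refine Or.inr ⟨by positivity, ?_⟩
    have := td_map_le p
    rw [hpdeg] at this
    exact_mod_cast this
  set Rtot : MvPolynomial (Fin d ⊕ Fin d) ℂ :=
    ∑ j ∈ Finset.range N, polyIter pc k (j + 1) with hR_def
  have hTot : sharpTot (evalF pc) (k + 1) = evalF (pc ^ (k + 1) + Rtot) :=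
    sharpTot_eq_evalF hpcdeg
  have hRdeg : DegLe Rtot ((N : ℝ) - 2) := by
    apply degLe_sum
    intro j _
    apply degLe_mono (degLe_polyIter hpcdeg k (j + 1))
    simp only [hN_def]
    push_cast
    nlinarith [Nat.cast_nonneg (α := ℝ) j]
  -- the remainder function
  have hdiff : (fun v => sharpTot (fun u => ((a u : ℝ) : ℂ)) (k + 1) v
      - ((a v : ℝ) : ℂ) ^ (k + 1)) = evalF Rtot := by
    funext v
    rw [show (fun u => ((a u : ℝ) : ℂ)) = (fun v : EuclideanSpace ℝ (Fin d ⊕ Fin d)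
      => ((a v : ℝ) : ℂ)) from rfl, hAeq, hTot]
    have h1 : evalF (pc ^ (k + 1) + Rtot) v = evalF (pc ^ (k + 1)) v + evalF Rtot v := by
      rw [evalF, evalF, evalF, map_add]
    have h2 : evalF (pc ^ (k + 1)) v = (evalF pc v) ^ (k + 1) := by
      rw [evalF, evalF, map_pow]
    have h3 : ((a v : ℝ) : ℂ) = evalF pc v := congrFun hAeq v
    rw [h1, h2, h3]
    ring
  -- constants
  set G : Finset (Fin d ⊕ Fin d → ℕ) :=
    Fintype.piFinset (fun _ : Fin d ⊕ Fin d => Finset.range (N + 1)) with hG_def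
  set K : ℝ := ∑ γ ∈ G, Kc (pdList (lst γ) Rtot) with hK_def
  have hK0 : 0 ≤ K := Finset.sum_nonneg fun _ _ => Kc_nonneg _
  have hKmem : ∀ γ ∈ G, Kc (pdList (lst γ) Rtot) ≤ K := fun γ hγ =>
    Finset.single_le_sum (f := fun γ => Kc (pdList (lst γ) Rtot))
      (fun _ _ => Kc_nonneg _) hγ
  have hzG : (fun _ : Fin d ⊕ Fin d => 0) ∈ G := by
    rw [hG_def, Fintype.mem_piFinset]
    intro i
    simp
  have hKr : Kc Rtot ≤ K := by
    have := hKmem _ hzG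
    rwa [lst_zero, show pdList ([] : List (Fin d ⊕ Fin d)) Rtot = Rtot from rfl] at this
  clear_value pc Rtot K G
  set c : ℝ := C₁ ^ (k + 1) with hc_def
  have hc1 : 1 ≤ c := one_le_pow₀ hC₁
  have hcpos : 0 < c := lt_of_lt_of_le one_pos hc1
  set C' : ℝ := 2 * c + K + 1 with hC'_def
  have hC'1 : 1 ≤ C' := by nlinarith
  have hC'pos : 0 < C' := lt_of_lt_of_le one_pos hC'1
  set B' : ℝ := max B₁ (Real.sqrt (2 * K * c) + 1) with hB'_def
  have hB'B₁ : B₁ ≤ B' := le_max_left _ _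
  have hB'pos : 0 < B' := lt_of_lt_of_le (lt_of_lt_of_le one_pos hB₁) hB'B₁
  refine ⟨C', B', hC'pos, hB'pos, ?_, ?_⟩
  · -- part 1
    intro w hw
    have hJ1 : 1 ≤ jap w := jap_one_le w
    have hJpos : 0 < jap w := jap_pos w
    have hJB' : B' ≤ jap w := by
      rw [QQ, Set.mem_setOf_eq, not_and_or, not_lt, not_lt] at hw
      rcases hw with h | h
      · exact h.trans (japX_le_jap w)
      · exact h.trans (japXi_le_jap w)
    have hwB₁ : w ∉ QQ d B₁ := by
      intro hmem
      rw [QQ, Set.mem_setOf_eq] at hmem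
      rw [QQ, Set.mem_setOf_eq, not_and_or, not_lt, not_lt] at hw
      rcases hw with h | h
      · linarith [hmem.1]
      · linarith [hmem.2]
    obtain ⟨hell1, hell2⟩ := hell w hwB₁
    set J : ℝ := jap w with hJ_def
    set JN : ℝ := J ^ ((k + 1) * m) with hJN_def
    have hJN1 : 1 ≤ JN := one_le_pow₀ hJ1
    have hJNpos : 0 < JN := lt_of_lt_of_le one_pos hJN1
    -- the real part decomposition
    have hre : (sharpTot (fun v => ((a v : ℝ) : ℂ)) (k + 1) w).re
        = (a w) ^ (k + 1) + (evalF Rtot w).re := by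
      rw [hAeq, hTot]
      have h1 : evalF (pc ^ (k + 1) + Rtot) w = ((((a w) ^ (k + 1) : ℝ)) : ℂ)
          + evalF Rtot w := by
        rw [evalF, evalF, map_add]
        congr 1
        rw [show MvPolynomial.eval (fun j => ((w j : ℝ) : ℂ)) (pc ^ (k+1))
          = evalF (pc ^ (k+1)) w from rfl, evalF, map_pow]
        rw [show MvPolynomial.eval (fun j => ((w j : ℝ) : ℂ)) pc = evalF pc w from rfl]
        rw [← congrFun hAeq w]
        push_cast
        ring
      rw [h1, Complex.add_re, Complex.ofReal_re]
    set E : ℝ := (evalF Rtot w).re with hE_def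
    have hEbound : |E| ≤ K * (JN / J ^ 2) := by
      have h1 : |E| ≤ ‖evalF Rtot w‖ := Complex.abs_re_le_norm _
      have h2 : ‖evalF Rtot w‖ ≤ Kc Rtot * J ^ ((N : ℝ) - 2) := evalF_bound hRdeg w
      have h3 : J ^ ((N : ℝ) - 2) = JN / J ^ 2 := by
        rw [Real.rpow_sub hJpos, Real.rpow_natCast, Real.rpow_two, hJN_def, hN_def]
      rw [h3] at h2
      calc |E| ≤ Kc Rtot * (JN / J ^ 2) := h1.trans h2
        _ ≤ K * (JN / J ^ 2) := by
            apply mul_le_mul_of_nonneg_right hKr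
            positivity
    have hJsq : 2 * K * c ≤ J ^ 2 := by
      have h1 : Real.sqrt (2 * K * c) + 1 ≤ B' := le_max_right _ _
      have h2 : Real.sqrt (2 * K * c) ≤ J := by linarith
      have h3 : Real.sqrt (2 * K * c) ^ 2 ≤ J ^ 2 :=
        pow_le_pow_left₀ (Real.sqrt_nonneg _) h2 2
      rwa [Real.sq_sqrt (by positivity)] at h3
    have hE2 : 2 * c * |E| ≤ JN := by
      rcases eq_or_lt_of_le hK0 with hKz | hKpos
      · have : |E| ≤ 0 := by
          rw [← hKz] at hEbound
          simpa using hEbound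
        nlinarith
      · have h1 : |E| * J ^ 2 ≤ K * JN := by
          have := mul_le_mul_of_nonneg_right hEbound (le_of_lt (by positivity : (0:ℝ) < J ^ 2))
          calc |E| * J ^ 2 ≤ K * (JN / J ^ 2) * J ^ 2 := this
            _ = K * JN := by field_simp
        have h2 : |E| * (2 * K * c) ≤ |E| * J ^ 2 :=
          mul_le_mul_of_nonneg_left hJsq (abs_nonneg _)
        have h3 : |E| * (2 * K * c) ≤ K * JN := h2.trans h1
        have h4 : K * (2 * c * |E|) ≤ K * JN := by
          calc K * (2 * c * |E|) = |E| * (2 * K * c) := by ring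
            _ ≤ K * JN := h3
        exact le_of_mul_le_mul_left h4 hKpos
    have hap : JN ≤ c * (a w) ^ (k + 1) := by
      have h1 : (J ^ m) ^ (k + 1) ≤ (C₁ * a w) ^ (k + 1) :=
        pow_le_pow_left₀ (by positivity) hell1 _
      have h2 : (J ^ m) ^ (k + 1) = JN := by
        rw [hJN_def, ← pow_mul, mul_comm]
      rw [h2, mul_pow] at h1
      exact h1
    have haw_nonneg : 0 ≤ a w := le_trans zero_le_one hell2
    -- upper bound for a w
    have hawup : a w ≤ C₁ * J ^ m := by
      have h0 := hder (fun _ => 0) w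
      rw [mderiv_zero_apply] at h0
      have hmd : mdeg (fun _ : Fin d ⊕ Fin d => (0:ℕ)) = 0 := by simp [mdeg]
      rw [hmd] at h0
      have : ((m : ℝ) - ((0:ℕ) : ℝ)) = ((m : ℕ) : ℝ) := by push_cast; ring
      rw [this, Real.rpow_natCast] at h0
      calc a w ≤ |a w| := le_abs_self _
        _ ≤ C₁ * J ^ m := h0
    have hAup : (a w) ^ (k + 1) ≤ c * JN := by
      have h1 : (a w) ^ (k + 1) ≤ (C₁ * J ^ m) ^ (k + 1) :=
        pow_le_pow_left₀ haw_nonneg hawup _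
      rw [mul_pow, ← pow_mul, mul_comm m (k+1)] at h1
      exact h1
    constructor
    · -- lower bound
      rw [hre]
      rw [div_le_iff₀ hC'pos]
      have hElow : -JN ≤ 2 * c * E := by
        have := neg_abs_le E
        nlinarith
    -- JN ≤ ((a w)^(k+1) + E) * C'
      have hsum : JN ≤ ((a w) ^ (k + 1) + E) * (2 * c) := by nlinarith
      have hsumpos : 0 ≤ (a w) ^ (k + 1) + E := by nlinarith
      calc (jap w) ^ ((k+1) * m) = JN := rfl
        _ ≤ ((a w) ^ (k + 1) + E) * (2 * c) := hsum
        _ ≤ ((a w) ^ (k + 1) + E) * C' := by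
            apply mul_le_mul_of_nonneg_left _ hsumpos
            nlinarith
    · -- upper bound
      rw [hre]
      have hEup : E ≤ K * JN := by
        have h1 : E ≤ |E| := le_abs_self _
        have h2 : K * (JN / J ^ 2) ≤ K * JN := by
          apply mul_le_mul_of_nonneg_left _ hK0
          rw [div_le_iff₀ (by positivity)]
          have hJ2 : 1 ≤ J ^ 2 := one_le_pow₀ hJ1
          nlinarith [hJ2, hJNpos]
        linarith [hEbound]
      have hcK : c + K ≤ C' := by rw [hC'_def]; linarith
      calc (a w) ^ (k + 1) + E ≤ c * JN + K * JN := by linarith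
        _ = (c + K) * JN := by ring
        _ ≤ C' * JN := mul_le_mul_of_nonneg_right hcK (le_of_lt hJNpos)
  · -- part 2
    intro w γ
    have hJ1 : 1 ≤ jap w := jap_one_le w
    have hJpos : 0 < jap w := jap_pos w
    rw [hdiff, norm_Dm_eq, mderiv_evalF]
    set q : MvPolynomial (Fin d ⊕ Fin d) ℂ := pdList (lst γ) Rtot with hq_def
    have hqdeg : DegLe q (((N : ℝ) - 2) - (mdeg γ : ℝ)) := by
      have := degLe_pdList (lst γ) hRdeg
      rwa [lst_length] at this
    by_cases hneg : ((N : ℝ) - 2) - (mdeg γ : ℝ) < 0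
    · have hz : q = 0 := degLe_neg_eq_zero hqdeg hneg
      rw [hz]
      have : evalF (0 : MvPolynomial (Fin d ⊕ Fin d) ℂ) w = 0 := by simp [evalF]
      rw [this, norm_zero]
      positivity
    · push_neg at hneg
      have hmdle : (mdeg γ : ℝ) ≤ (N : ℝ) - 2 := by linarith
      have hmdleN : mdeg γ ≤ N := by
        have h2 : (0:ℝ) ≤ 2 := by norm_num
        have : (mdeg γ : ℝ) ≤ (N : ℝ) := by linarith
        exact_mod_cast this
      have hγG : γ ∈ G := by
        rw [hG_def, Fintype.mem_piFinset]
        intro i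
        rw [Finset.mem_range]
        have : γ i ≤ mdeg γ :=
          Finset.single_le_sum (f := fun i => γ i) (fun _ _ => Nat.zero_le _)
            (Finset.mem_univ i)
        omega
      have hKq : Kc q ≤ K := hKmem γ hγG
      have hb := evalF_bound hqdeg w
      have hexp : (((N : ℝ) - 2) - (mdeg γ : ℝ))
          = ((((k+1) * m : ℕ) : ℝ) - (mdeg γ : ℝ) - 2) := by
        rw [hN_def]; push_cast; ring
      rw [hexp] at hb
      refine hb.trans ?_
      apply mul_le_mul_of_nonneg_right _ (Real.rpow_nonneg (le_of_lt hJpos) _)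
      calc Kc q ≤ K := hKq
        _ ≤ C' := by nlinarith
        _ = C' ^ 1 := (pow_one C').symm
        _ ≤ C' ^ (mdeg γ + 1) := pow_le_pow_right₀ hC'1 (by omega)
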